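/- Let 𝔄 be a C*-algebra, E a Hilbert C*-module over 𝔄, and (U_t)_{t∈ℝ} a C_0-group on E such that every U_t is a unitary element of L(E). Then: (i) there exists a self-adjoint regular operator A on E such that U_t = exp(itA) := φ_A(λ ↦ exp(iλt)) for all t ∈ ℝ; (ii) if moreover t ↦ U_t is norm continuous, then A ∈ L(E), i.e. A is a bounded adjointable operator. -/

import Mathlib

open Filter Topology Set ContinuousLinearMap
open scoped RightActions

noncomputable section

universe u

namespace OSMult

/-- The Hilbert C⋆-module structure (right `A`-module) as `CStarModule` was defined in the
older Mathlib; Mathlib's `CStarModule` now describes left modules. -/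
class CStarModuleRight (A : outParam <| Type*) (E : Type*) [NonUnitalSemiring A] [StarRing A] [Module ℂ A]
    [AddCommGroup E] [Module ℂ E] [PartialOrder A] [SMul Aᵐᵒᵖ E] [Norm A] [Norm E]
    extends Inner A E where
  inner_add_right {x} {y} {z} : inner x (y + z) = inner x y + inner x z
  inner_self_nonneg {x} : 0 ≤ inner x x
  inner_self {x} : inner x x = 0 ↔ x = 0
  inner_op_smul_right {a : A} {x y : E} : inner x (y <• a) = inner x y * a
  inner_smul_right_complex {z : ℂ} {x} {y} : inner x (z • y) = z • inner x y
  star_inner x y : star (inner x y) = inner y x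
  norm_eq_sqrt_norm_inner_self x : ‖x‖ = √‖inner x x‖

section Groups

variable {V : Type*} [NormedAddCommGroup V] [NormedSpace ℂ V]

/-- A `C₀`-group (strongly continuous one-parameter group) on `V`. -/
structure IsC0Group (U : ℝ → (V →L[ℂ] V)) : Prop where
  map_zero : U 0 = ContinuousLinearMap.id ℂ V
  map_add : ∀ s t : ℝ, U (s + t) = (U s).comp (U t)
  strong_cont : ∀ x : V, Continuous fun t => U t x

/-- `A`, with domain `D`, is the generator of the group `U`. -/
def IsGenOfGroup (U : ℝ → (V →L[ℂ] V)) (D : Set V) (A : V → V) : Prop :=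
  (∀ x, x ∈ D ↔ ∃ y, Tendsto (fun t : ℝ => (t : ℂ)⁻¹ • (U t x - x)) (𝓝[≠] (0 : ℝ)) (𝓝 y)) ∧
    ∀ x ∈ D, Tendsto (fun t : ℝ => (t : ℂ)⁻¹ • (U t x - x)) (𝓝[≠] (0 : ℝ)) (𝓝 (A x))

/-- `A : D ⊆ V → V` is `ℂ`-linear on its domain `D`. -/
structure IsLinearOn (D : Set V) (A : V → V) : Prop where
  zero_mem : (0 : V) ∈ D
  add_mem : ∀ ⦃x y⦄, x ∈ D → y ∈ D → x + y ∈ D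
  smul_mem : ∀ (c : ℂ) ⦃x⦄, x ∈ D → c • x ∈ D
  map_add : ∀ ⦃x y⦄, x ∈ D → y ∈ D → A (x + y) = A x + A y
  map_smul : ∀ (c : ℂ) ⦃x⦄, x ∈ D → A (c • x) = c • A x

end Groups

section HilbertModule

variable {A : Type u} [NonUnitalCStarAlgebra A] [PartialOrder A] [StarOrderedRing A]
variable {E : Type u} [NormedAddCommGroup E] [NormedSpace ℂ E] [SMul Aᵐᵒᵖ E]
  [CStarModuleRight A E] [CompleteSpace E]

local notation "⟪" x ", " y "⟫" => inner (𝕜 := A) x y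

/-- The domain of the adjoint of the (unbounded) operator `T : D ⊆ E → E` on the Hilbert
C⋆-module `E`: all `y` for which some `z` satisfies `⟪Tx, y⟫ = ⟪x, z⟫` for all `x ∈ D`. -/
def adjDom (D : Set E) (T : E → E) : Set E :=
  {y | ∃ z : E, ∀ x ∈ D, ⟪T x, y⟫ = ⟪x, z⟫}

/-- The adjoint `T*` of the (unbounded) operator `T : D ⊆ E → E`; on `D(T*)` its value is
the (for densely defined `T` unique) element `z` with `⟪Tx, y⟫ = ⟪x, z⟫` for all `x ∈ D`. -/
def adjFun (D : Set E) (T : E → E) (y : E) : E :=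
  letI := Classical.propDecidable
  if h : ∃ z : E, ∀ x ∈ D, ⟪T x, y⟫ = ⟪x, z⟫ then Classical.choose h else 0

/-- `T : D ⊆ E → E` is a regular operator on the Hilbert C⋆-module `E`: it is densely
defined, `A`-linear, closed, its adjoint `T*` is densely defined, and `1 + T*T` has dense
image. -/
structure IsRegular (D : Set E) (T : E → E) : Prop where
  dense_dom : Dense D
  linear : IsLinearOn D T
  op_smul_mem : ∀ (a : A) ⦃x⦄, x ∈ D → x <• a ∈ D
  map_op_smul : ∀ (a : A) ⦃x⦄, x ∈ D → T (x <• a) = T x <• a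
  closed_graph : IsClosed {p : E × E | p.1 ∈ D ∧ p.2 = T p.1}
  dense_adj_dom : Dense (adjDom D T)
  dense_image : Dense ((fun x => x + adjFun D T (T x)) '' {x | x ∈ D ∧ T x ∈ adjDom D T})

/-- The regular operator `T` is self-adjoint: `T* = T`. -/
def IsSelfAdjointOp (D : Set E) (T : E → E) : Prop :=
  adjDom D T = D ∧ ∀ y ∈ D, adjFun D T y = T y

/-- The regular operator `T` is skew-adjoint: `T* = -T`. -/
def IsSkewAdjointOp (D : Set E) (T : E → E) : Prop :=
  adjDom D T = D ∧ ∀ y ∈ D, adjFun D T y = -T y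

/-- `v` is an adjoint of the bounded operator `u` on the Hilbert C⋆-module `E`; thus
`u` is an adjointable operator, `u ∈ L(E)`. -/
def AdjointableCLM (u v : E →L[ℂ] E) : Prop :=
  ∀ x y : E, ⟪u x, y⟫ = ⟪x, v y⟫

/-- `u` is a unitary element of the C⋆-algebra `L(E)` of adjointable operators on `E`. -/
def IsUnitaryCLM (u : E →L[ℂ] E) : Prop :=
  ∃ v : E →L[ℂ] E, AdjointableCLM u v ∧
    v.comp u = ContinuousLinearMap.id ℂ E ∧ u.comp v = ContinuousLinearMap.id ℂ E

end HilbertModule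

section CStarHelpers

variable {A : Type*} [NonUnitalCStarAlgebra A] [PartialOrder A] [StarOrderedRing A]
variable {E : Type*} [NormedAddCommGroup E] [NormedSpace ℂ E] [SMul Aᵐᵒᵖ E]
  [CStarModuleRight A E]

local notation "⟪" x ", " y "⟫" => inner (𝕜 := A) x y

namespace CStarModule

@[simp] lemma inner_add_right {x y z : E} : ⟪x, y + z⟫ = ⟪x, y⟫ + ⟪x, z⟫ :=
  CStarModuleRight.inner_add_right
lemma inner_self_nonneg {x : E} : 0 ≤ ⟪x, x⟫ := CStarModuleRight.inner_self_nonneg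
lemma inner_self {x : E} : ⟪x, x⟫ = 0 ↔ x = 0 := CStarModuleRight.inner_self
@[simp] lemma inner_op_smul_right {a : A} {x y : E} : ⟪x, y <• a⟫ = ⟪x, y⟫ * a :=
  CStarModuleRight.inner_op_smul_right
@[simp] lemma inner_smul_right_complex {z : ℂ} {x y : E} : ⟪x, z • y⟫ = z • ⟪x, y⟫ :=
  CStarModuleRight.inner_smul_right_complex
@[simp] lemma star_inner (x y : E) : star ⟪x, y⟫ = ⟪y, x⟫ := CStarModuleRight.star_inner x y
lemma norm_eq_sqrt_norm_inner_self (x : E) : ‖x‖ = √‖⟪x, x⟫‖ :=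
  CStarModuleRight.norm_eq_sqrt_norm_inner_self x

lemma inner_op_smul_left {a : A} {x y : E} : ⟪x <• a, y⟫ = star a * ⟪x, y⟫ := by
  rw [← star_inner y, inner_op_smul_right, star_mul, star_inner]

lemma inner_add_left {x y z : E} : ⟪x + y, z⟫ = ⟪x, z⟫ + ⟪y, z⟫ := by
  rw [← star_inner z, inner_add_right, star_add, star_inner, star_inner]

lemma inner_smul_left_complex {z : ℂ} {x y : E} : ⟪z • x, y⟫ = star z • ⟪x, y⟫ := by
  rw [← star_inner y, inner_smul_right_complex, star_smul, star_inner]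

lemma inner_smul_right_real {z : ℝ} {x y : E} : ⟪x, z • y⟫ = z • ⟪x, y⟫ := by
  rw [← Complex.coe_smul, inner_smul_right_complex, Complex.coe_smul]

lemma inner_smul_left_real {z : ℝ} {x y : E} : ⟪z • x, y⟫ = z • ⟪x, y⟫ := by
  rw [← star_inner y, inner_smul_right_real, star_smul, star_trivial, star_inner]

@[simp] lemma inner_zero_right {x : E} : ⟪x, 0⟫ = 0 := by
  have h : ⟪x, 0 + 0⟫ = ⟪x, 0⟫ + ⟪x, 0⟫ := inner_add_right
  rw [add_zero] at h
  simpa using h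

@[simp] lemma inner_zero_left {x : E} : ⟪0, x⟫ = 0 := by
  rw [← star_inner x, inner_zero_right, star_zero]

@[simp] lemma inner_neg_right {x y : E} : ⟪x, -y⟫ = -⟪x, y⟫ := by
  refine eq_neg_of_add_eq_zero_left ?_
  rw [← inner_add_right, neg_add_cancel, inner_zero_right]

@[simp] lemma inner_sub_right {x y z : E} : ⟪x, y - z⟫ = ⟪x, y⟫ - ⟪x, z⟫ := by
  rw [sub_eq_add_neg, inner_add_right, inner_neg_right, ← sub_eq_add_neg]

@[simp] lemma inner_sub_left {x y z : E} : ⟪x - y, z⟫ = ⟪x, z⟫ - ⟪y, z⟫ := by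
  rw [← star_inner z, inner_sub_right, star_sub, star_inner, star_inner]

lemma norm_sq_eq {x : E} : ‖x‖ ^ 2 = ‖⟪x, x⟫‖ := by
  rw [norm_eq_sqrt_norm_inner_self x, Real.sq_sqrt (norm_nonneg _)]

lemma inner_mul_inner_swap_le' {x y : E} : ⟪y, x⟫ * ⟪x, y⟫ ≤ ‖x‖ ^ 2 • ⟪y, y⟫ := by
  rcases eq_or_ne x 0 with h | h
  · subst h
    simp
  · have h₁ : ∀ (a : A),
        (0 : A) ≤ ‖x‖ ^ 2 • (star a * a) - ‖x‖ ^ 2 • (star a * ⟪x, y⟫)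
                  - ‖x‖ ^ 2 • (⟪y, x⟫ * a) + ‖x‖ ^ 2 • (‖x‖ ^ 2 • ⟪y, y⟫) := fun a => by
      calc (0 : A) ≤ ⟪x <• a - ‖x‖ ^ 2 • y, x <• a - ‖x‖ ^ 2 • y⟫ := by exact inner_self_nonneg
            _ = star a * ⟪x, x⟫ * a - ‖x‖ ^ 2 • (star a * ⟪x, y⟫)
                  - ‖x‖ ^ 2 • (⟪y, x⟫ * a) + ‖x‖ ^ 2 • (‖x‖ ^ 2 • ⟪y, y⟫) := by
                      simp only [inner_sub_right, inner_op_smul_right, inner_sub_left,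
                        inner_op_smul_left, inner_smul_left_real, smul_mul_assoc,
                        inner_smul_right_real, smul_sub, sub_mul, mul_assoc]
                      abel
            _ ≤ ‖x‖ ^ 2 • (star a * a) - ‖x‖ ^ 2 • (star a * ⟪x, y⟫)
                  - ‖x‖ ^ 2 • (⟪y, x⟫ * a) + ‖x‖ ^ 2 • (‖x‖ ^ 2 • ⟪y, y⟫) := by
                      gcongr
                      calc _ ≤ ‖⟪x, x⟫‖ • (star a * a) :=
                          CStarAlgebra.star_left_conjugate_le_norm_smul (star_inner x x)
                        _ = ‖x‖ ^ 2 • (star a * a) := by rw [norm_sq_eq]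
    specialize h₁ ⟪x, y⟫
    simp only [star_inner, sub_self, zero_sub, le_neg_add_iff_add_le, add_zero] at h₁
    rwa [smul_le_smul_iff_of_pos_left (pow_pos (norm_pos_iff.mpr h) _)] at h₁

lemma norm_inner_le {x y : E} : ‖⟪x, y⟫‖ ≤ ‖x‖ * ‖y‖ := by
  have := calc ‖⟪x, y⟫‖ ^ 2 = ‖⟪y, x⟫ * ⟪x, y⟫‖ := by
                rw [← star_inner x y, CStarRing.norm_star_mul_self, pow_two]
    _ ≤ ‖‖x‖ ^ 2 • ⟪y, y⟫‖ := by
                refine CStarAlgebra.norm_le_norm_of_nonneg_of_le ?_ inner_mul_inner_swap_le'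
                rw [← star_inner x y]
                exact star_mul_self_nonneg _
    _ = ‖x‖ ^ 2 * ‖⟪y, y⟫‖ := by
                rw [norm_smul, Real.norm_eq_abs, abs_of_nonneg (by positivity)]
    _ = (‖x‖ * ‖y‖) ^ 2 := by rw [← norm_sq_eq]; ring
  exact (pow_le_pow_iff_left₀ (norm_nonneg _) (by positivity) (by norm_num : (2:ℕ) ≠ 0)).mp this

/-- The inner product as a continuous sesquilinear map. -/
def innerSL₂ : E →L⋆[ℂ] E →L[ℂ] A :=
  LinearMap.mkContinuous₂ (LinearMap.mk₂'ₛₗ (starRingEnd ℂ) (RingHom.id ℂ)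
    (fun x y => ⟪x, y⟫) (fun _ _ _ => inner_add_left) (fun _ _ _ => inner_smul_left_complex)
    (fun _ _ _ => inner_add_right) (fun _ _ _ => inner_smul_right_complex)) 1
    (fun x y => by simpa using norm_inner_le)

/-- `⟪x, ·⟫` as a continuous linear map. -/
def innerSL (x : E) : E →L[ℂ] A := innerSL₂ x

lemma continuous_inner : Continuous (fun p : E × E => ⟪p.1, p.2⟫) := by
  show Continuous fun p : E × E => innerSL₂ (A := A) p.1 p.2
  fun_prop

end CStarModule

end CStarHelpers


section HilbertModule

variable {A : Type u} [NonUnitalCStarAlgebra A] [PartialOrder A] [StarOrderedRing A]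
variable {E : Type u} [NormedAddCommGroup E] [NormedSpace ℂ E] [SMul Aᵐᵒᵖ E]
  [CStarModuleRight A E] [CompleteSpace E]

local notation "⟪" x ", " y "⟫" => inner (𝕜 := A) x y

omit [CompleteSpace E] in
lemma ext_inner_right {u u' : E} (h : ∀ w : E, ⟪w, u⟫ = ⟪w, u'⟫) : u = u' := by
  have h0 : ∀ w : E, ⟪w, u - u'⟫ = 0 := fun w => by
    rw [CStarModule.inner_sub_right, h, sub_self]
  have := h0 (u - u')
  rw [CStarModule.inner_self] at this
  exact sub_eq_zero.mp this

omit [CompleteSpace E] in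
lemma ext_inner_left {u u' : E} (h : ∀ w : E, ⟪u, w⟫ = ⟪u', w⟫) : u = u' :=
  ext_inner_right fun w => by
    rw [← CStarModule.star_inner u w, ← CStarModule.star_inner u' w, h]

omit [CompleteSpace E] in
lemma eq_of_inner_eq_on_dense {D : Set E} (hD : Dense D) {v w : E}
    (h : ∀ x ∈ D, ⟪x, v⟫ = ⟪x, w⟫) : v = w := by
  have hc1 : Continuous fun x : E => ⟪x, v⟫ :=
    CStarModule.continuous_inner.comp (continuous_id.prodMk continuous_const)
  have hc2 : Continuous fun x : E => ⟪x, w⟫ :=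
    CStarModule.continuous_inner.comp (continuous_id.prodMk continuous_const)
  have := Continuous.ext_on hD hc1 hc2 h
  exact ext_inner_right fun x => congrFun this x

omit [CompleteSpace E] in
lemma opSmul_sub (x y : E) (a : A) : (x - y) <• a = x <• a - y <• a :=
  ext_inner_right fun w => by
    simp [CStarModule.inner_op_smul_right, sub_mul]

omit [CompleteSpace E] in
lemma opSmul_smul (c : ℂ) (x : E) (a : A) : (c • x) <• a = c • (x <• a) :=
  ext_inner_right fun w => by
    simp [CStarModule.inner_op_smul_right, smul_mul_assoc]

omit [CompleteSpace E] in
lemma norm_opSmul_le (x : E) (a : A) : ‖x <• a‖ ≤ ‖x‖ * ‖a‖ := by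
  have h1 : ⟪x <• a, x <• a⟫ = star a * (⟪x, x⟫ * a) := by
    rw [CStarModule.inner_op_smul_left, CStarModule.inner_op_smul_right]
  have h2 : ‖⟪x <• a, x <• a⟫‖ ≤ (‖x‖ * ‖a‖) ^ 2 := by
    rw [h1]
    calc ‖star a * (⟪x, x⟫ * a)‖ ≤ ‖star a‖ * (‖⟪x, x⟫‖ * ‖a‖) :=
          norm_mul_le _ _ |>.trans (by gcongr; exact norm_mul_le _ _)
      _ = ‖a‖ * (‖x‖ ^ 2 * ‖a‖) := by rw [norm_star, CStarModule.norm_sq_eq]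
      _ = (‖x‖ * ‖a‖) ^ 2 := by ring
  rw [CStarModule.norm_eq_sqrt_norm_inner_self]
  calc √‖⟪x <• a, x <• a⟫‖ ≤ √((‖x‖ * ‖a‖) ^ 2) := Real.sqrt_le_sqrt h2
    _ = ‖x‖ * ‖a‖ := Real.sqrt_sq (by positivity)

omit [CompleteSpace E] in
lemma tendsto_opSmul {α : Type*} {l : Filter α} {f : α → E} {b : E} (a : A)
    (hf : Tendsto f l (𝓝 b)) : Tendsto (fun t => f t <• a) l (𝓝 (b <• a)) := by
  rw [tendsto_iff_norm_sub_tendsto_zero] at hf ⊢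
  refine squeeze_zero (fun t => norm_nonneg _) (fun t => ?_) (by
    simpa using hf.mul_const ‖a‖)
  rw [← opSmul_sub]
  exact norm_opSmul_le _ _

section GroupFacts

variable {U : ℝ → E →L[ℂ] E}

lemma U_comp_cancel (hgrp : IsC0Group U) (t : ℝ) (x : E) : U t (U (-t) x) = x := by
  have h := hgrp.map_add t (-t)
  rw [add_neg_cancel, hgrp.map_zero] at h
  have := congrArg (fun (L : E →L[ℂ] E) => L x) h
  simpa using this.symm

lemma U_adj (hgrp : IsC0Group U) (hunit : ∀ t : ℝ, IsUnitaryCLM (U t)) (t : ℝ) (x y : E) :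
    ⟪U t x, y⟫ = ⟪x, U (-t) y⟫ := by
  obtain ⟨v, hv, hvu, huv⟩ := hunit t
  have hveq : ∀ z, v z = U (-t) z := by
    intro z
    have h1 : v (U t (U (-t) z)) = U (-t) z := by
      have := congrArg (fun (L : E →L[ℂ] E) => L (U (-t) z)) hvu
      simpa using this
    rwa [U_comp_cancel hgrp t z] at h1
  rw [hv x y, hveq y]

lemma U_norm_eq (hgrp : IsC0Group U) (hunit : ∀ t : ℝ, IsUnitaryCLM (U t)) (t : ℝ) (x : E) :
    ‖U t x‖ = ‖x‖ := by
  rw [CStarModule.norm_eq_sqrt_norm_inner_self, CStarModule.norm_eq_sqrt_norm_inner_self (x := x)]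
  congr 2
  rw [U_adj hgrp hunit t]
  congr 1
  have := U_comp_cancel hgrp (-t) x
  rwa [neg_neg] at this

lemma U_opSmul (hgrp : IsC0Group U) (hunit : ∀ t : ℝ, IsUnitaryCLM (U t)) (t : ℝ) (x : E)
    (a : A) : U t (x <• a) = U t x <• a :=
  ext_inner_left fun w => by
    rw [U_adj hgrp hunit t, CStarModule.inner_op_smul_left, CStarModule.inner_op_smul_left,
      U_adj hgrp hunit t]

end GroupFacts

set_option linter.unusedSectionVars false

section Generator

variable {U : ℝ → E →L[ℂ] E}

omit [CompleteSpace E] in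
lemma coe_inv_smul (t : ℝ) (v : E) : (t : ℂ)⁻¹ • v = t⁻¹ • v := by
  rw [← Complex.ofReal_inv, Complex.coe_smul]

/-- The domain of the generator. -/
def genD (U : ℝ → E →L[ℂ] E) : Set E :=
  {x | ∃ y, Tendsto (fun t : ℝ => (t : ℂ)⁻¹ • (U t x - x)) (𝓝[≠] (0 : ℝ)) (𝓝 y)}

/-- The generator. -/
noncomputable def genB (U : ℝ → E →L[ℂ] E) (x : E) : E :=
  @dite E (x ∈ genD U) (Classical.dec _) (fun h => h.choose) (fun _ => 0)

lemma genB_spec {x : E} (hx : x ∈ genD U) :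
    Tendsto (fun t : ℝ => (t : ℂ)⁻¹ • (U t x - x)) (𝓝[≠] (0 : ℝ)) (𝓝 (genB U x)) := by
  rw [genB, dif_pos hx]
  exact hx.choose_spec

lemma mem_genD_of_tendsto {x y : E}
    (h : Tendsto (fun t : ℝ => (t : ℂ)⁻¹ • (U t x - x)) (𝓝[≠] (0 : ℝ)) (𝓝 y)) :
    x ∈ genD U ∧ genB U x = y :=
  have hx : x ∈ genD U := ⟨y, h⟩
  ⟨hx, tendsto_nhds_unique (genB_spec hx) h⟩

lemma tendsto_average {g : ℝ → E} (hg : Continuous g) (a : ℝ) :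
    Tendsto (fun h : ℝ => (h : ℂ)⁻¹ • ∫ s in a..(a + h), g s) (𝓝[≠] (0 : ℝ)) (𝓝 (g a)) := by
  have hF : HasDerivAt (fun b => ∫ s in (0:ℝ)..b, g s) (g a) a :=
    intervalIntegral.integral_hasDerivAt_right
      (hg.intervalIntegrable (μ := MeasureTheory.volume) _ _)
      (hg.stronglyMeasurableAtFilter MeasureTheory.volume (𝓝 a)) hg.continuousAt
  have h2 := hF.tendsto_slope_zero
  refine h2.congr fun t => ?_
  rw [coe_inv_smul]
  congr 1
  exact intervalIntegral.integral_interval_sub_left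
    (hg.intervalIntegrable (μ := MeasureTheory.volume) _ _)
    (hg.intervalIntegrable (μ := MeasureTheory.volume) _ _)

lemma tendsto_average_zero {g : ℝ → E} (hg : Continuous g) :
    Tendsto (fun h : ℝ => (h : ℂ)⁻¹ • ∫ s in (0:ℝ)..h, g s) (𝓝[≠] (0 : ℝ)) (𝓝 (g 0)) := by
  have := tendsto_average hg 0
  simpa using this

omit [CompleteSpace E] in
lemma U_zero_apply (hgrp : IsC0Group U) (x : E) : U 0 x = x := by
  rw [hgrp.map_zero]; rfl

lemma genD_add {x y : E} (hx : x ∈ genD U) (hy : y ∈ genD U) :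
    x + y ∈ genD U ∧ genB U (x + y) = genB U x + genB U y := by
  refine mem_genD_of_tendsto (((genB_spec hx).add (genB_spec hy)).congr fun t => ?_)
  rw [← smul_add]
  congr 1
  rw [map_add]
  abel

lemma genD_smul (c : ℂ) {x : E} (hx : x ∈ genD U) :
    c • x ∈ genD U ∧ genB U (c • x) = c • genB U x := by
  refine mem_genD_of_tendsto (((genB_spec hx).const_smul c).congr fun t => ?_)
  rw [smul_comm]
  congr 1
  rw [map_smul, ← smul_sub]

lemma genD_zero : (0 : E) ∈ genD U ∧ genB U 0 = 0 := by
  refine mem_genD_of_tendsto (tendsto_const_nhds.congr fun t => ?_)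
  simp

lemma genD_opSmul (hgrp : IsC0Group U) (hunit : ∀ t : ℝ, IsUnitaryCLM (U t)) (a : A) {x : E}
    (hx : x ∈ genD U) : x <• a ∈ genD U ∧ genB U (x <• a) = genB U x <• a := by
  refine mem_genD_of_tendsto ((tendsto_opSmul a (genB_spec hx)).congr fun t => ?_)
  rw [U_opSmul hgrp hunit, ← opSmul_sub, ← opSmul_smul]

lemma genD_U (hgrp : IsC0Group U) (r : ℝ) {x : E} (hx : x ∈ genD U) :
    U r x ∈ genD U ∧ genB U (U r x) = U r (genB U x) := by
  refine mem_genD_of_tendsto ((((U r).continuous.tendsto _).comp (genB_spec hx)).congr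
    fun t => ?_)
  simp only [Function.comp_apply]
  rw [map_smul, map_sub]
  congr 2
  have h1 : U (t + r) = (U t).comp (U r) := hgrp.map_add t r
  have h2 : U (r + t) = (U r).comp (U t) := hgrp.map_add r t
  rw [add_comm] at h1
  rw [h1] at h2
  exact (congrArg (fun (L : E →L[ℂ] E) => L x) h2).symm

lemma j_mem_genD (hgrp : IsC0Group U) (x : E) (t : ℝ) :
    (∫ s in (0:ℝ)..t, U s x) ∈ genD U ∧ genB U (∫ s in (0:ℝ)..t, U s x) = U t x - x := by
  have hcont : Continuous fun s => U s x := hgrp.strong_cont x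
  have hI : ∀ a b : ℝ, IntervalIntegrable (fun s => U s x) MeasureTheory.volume a b :=
    fun a b => hcont.intervalIntegrable a b
  have h1 := tendsto_average hcont t
  have h2 := tendsto_average_zero hcont
  rw [U_zero_apply hgrp] at h2
  refine mem_genD_of_tendsto ((h1.sub h2).congr fun h => ?_)
  rw [← smul_sub]
  congr 1
  have key : U h (∫ s in (0:ℝ)..t, U s x) = ∫ s in h..(t + h), U s x := by
    rw [← (U h).intervalIntegral_comp_comm (hI 0 t)]
    have hc : ∀ s : ℝ, U h (U s x) = U (s + h) x := by
      intro s
      rw [add_comm, hgrp.map_add]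
      rfl
    simp_rw [hc]
    have := intervalIntegral.integral_comp_add_right (a := (0:ℝ)) (b := t)
      (fun s => U s x) h
    rw [this, zero_add]
  rw [key]
  have split1 : (∫ s in h..(t+h), U s x) =
      (∫ s in h..(0:ℝ), U s x) + (∫ s in (0:ℝ)..t, U s x) + ∫ s in t..(t+h), U s x := by
    rw [intervalIntegral.integral_add_adjacent_intervals (hI h 0) (hI 0 t),
      intervalIntegral.integral_add_adjacent_intervals (hI h t) (hI t (t+h))]
  rw [split1, intervalIntegral.integral_symm h 0]
  abel

lemma genD_dense (hgrp : IsC0Group U) : Dense (genD U) := by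
  intro x
  have h2 := tendsto_average_zero (hgrp.strong_cont x)
  rw [U_zero_apply hgrp] at h2
  exact mem_closure_of_tendsto h2 (Eventually.of_forall fun t =>
    (genD_smul ((t:ℂ)⁻¹) (j_mem_genD hgrp x t).1).1)

lemma hasDerivAt_U (hgrp : IsC0Group U) {x : E} (hx : x ∈ genD U) (t : ℝ) :
    HasDerivAt (fun s => U s x) (U t (genB U x)) t := by
  rw [hasDerivAt_iff_tendsto_slope_zero]
  have hm := genD_U hgrp t hx
  have h1 := genB_spec hm.1
  rw [hm.2] at h1
  refine h1.congr fun h => ?_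
  rw [coe_inv_smul]
  congr 2
  rw [add_comm, hgrp.map_add]
  rfl

lemma U_sub_integral (hgrp : IsC0Group U) {x : E} (hx : x ∈ genD U) (t : ℝ) :
    U t x - x = ∫ s in (0:ℝ)..t, U s (genB U x) := by
  have hcont : Continuous fun s => U s (genB U x) := hgrp.strong_cont _
  have hd : ∀ r : ℝ, HasDerivAt
      (fun r => U r x - ∫ s in (0:ℝ)..r, U s (genB U x)) 0 r := by
    intro r
    have h1 := hasDerivAt_U hgrp hx r
    have h2 : HasDerivAt (fun b => ∫ s in (0:ℝ)..b, U s (genB U x)) (U r (genB U x)) r :=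
      intervalIntegral.integral_hasDerivAt_right
        (hcont.intervalIntegrable (μ := MeasureTheory.volume) _ _)
        (hcont.stronglyMeasurableAtFilter MeasureTheory.volume (𝓝 r)) hcont.continuousAt
    have h3 := h1.sub h2
    rw [sub_self] at h3
    exact h3
  have hconst := is_const_of_deriv_eq_zero (fun r => (hd r).differentiableAt)
    (fun r => (hd r).deriv) t 0
  simp only [intervalIntegral.integral_same, sub_zero] at hconst
  rw [U_zero_apply hgrp] at hconst
  rw [sub_eq_iff_eq_add] at hconst ⊢
  rw [hconst]
  abel

lemma mem_genD_of_integral (hgrp : IsC0Group U) {x y : E}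
    (hxy : ∀ t : ℝ, U t x - x = ∫ s in (0:ℝ)..t, U s y) :
    x ∈ genD U ∧ genB U x = y := by
  have h2 := tendsto_average_zero (hgrp.strong_cont y)
  rw [U_zero_apply hgrp] at h2
  refine mem_genD_of_tendsto (h2.congr fun t => ?_)
  rw [← hxy t]

end Generator

section Closed

variable {U : ℝ → E →L[ℂ] E}

lemma genGraph_closed (hgrp : IsC0Group U) (hunit : ∀ t : ℝ, IsUnitaryCLM (U t)) :
    IsClosed {p : E × E | p.1 ∈ genD U ∧ p.2 = genB U p.1} := by
  refine IsSeqClosed.isClosed ?_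
  intro f p hf hfp
  have hx : Tendsto (fun n => (f n).1) atTop (𝓝 p.1) := ((continuous_fst.tendsto p).comp hfp)
  have hb : Tendsto (fun n => genB U ((f n).1)) atTop (𝓝 p.2) := by
    refine ((continuous_snd.tendsto p).comp hfp).congr fun n => ?_
    exact (hf n).2
  have key : ∀ t : ℝ, U t p.1 - p.1 = ∫ s in (0:ℝ)..t, U s p.2 := by
    intro t
    have h1 : Tendsto (fun n => U t ((f n).1) - (f n).1) atTop (𝓝 (U t p.1 - p.1)) :=
      (((U t).continuous.tendsto _).comp hx).sub hx
    have h2 : Tendsto (fun n => ∫ s in (0:ℝ)..t, U s (genB U ((f n).1))) atTop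
        (𝓝 (∫ s in (0:ℝ)..t, U s p.2)) := by
      rw [tendsto_iff_norm_sub_tendsto_zero]
      have hlim : Tendsto (fun n => ‖genB U ((f n).1) - p.2‖ * |t - 0|) atTop (𝓝 0) := by
        simpa using ((tendsto_iff_norm_sub_tendsto_zero.mp hb).mul_const |t - 0|)
      refine squeeze_zero (fun n => norm_nonneg _) (fun n => ?_) hlim
      have hint : ∀ z : E, IntervalIntegrable (fun s => U s z) MeasureTheory.volume 0 t :=
        fun z => (hgrp.strong_cont z).intervalIntegrable 0 t
      rw [← intervalIntegral.integral_sub (hint _) (hint _)]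
      refine intervalIntegral.norm_integral_le_of_norm_le_const fun s _ => ?_
      rw [← map_sub, U_norm_eq hgrp hunit]
    have h3 : Tendsto (fun n => U t ((f n).1) - (f n).1) atTop
        (𝓝 (∫ s in (0:ℝ)..t, U s p.2)) := by
      refine h2.congr fun n => ?_
      exact (U_sub_integral hgrp (hf n).1 t).symm
    exact tendsto_nhds_unique h1 h3
  have h := mem_genD_of_integral hgrp key
  exact ⟨h.1, h.2.symm⟩

lemma inner_genB_skew (hgrp : IsC0Group U) (hunit : ∀ t : ℝ, IsUnitaryCLM (U t)) {x y : E}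
    (hx : x ∈ genD U) (hy : y ∈ genD U) :
    ⟪genB U x, y⟫ + ⟪x, genB U y⟫ = 0 := by
  have hUc : ∀ h : ℝ, U (-h) (U h y) = y := by
    intro h
    have := U_comp_cancel hgrp (-h) y
    rwa [neg_neg] at this
  have hG : ∀ h : ℝ,
      ⟪(h:ℂ)⁻¹ • (U h x - x), U h y⟫ + ⟪x, (h:ℂ)⁻¹ • (U h y - y)⟫ = 0 := by
    intro h
    rw [coe_inv_smul, coe_inv_smul, CStarModule.inner_smul_left_real,
      CStarModule.inner_smul_right_real, ← smul_add]
    have hc : ⟪U h x, U h y⟫ = ⟪x, y⟫ := by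
      rw [U_adj hgrp hunit, hUc]
    have hz : ⟪U h x - x, U h y⟫ + ⟪x, U h y - y⟫ = 0 := by
      rw [CStarModule.inner_sub_left, CStarModule.inner_sub_right, hc]
      abel
    rw [hz, smul_zero]
  have hUy : Tendsto (fun h : ℝ => U h y) (𝓝[≠] (0:ℝ)) (𝓝 (U 0 y)) :=
    ((hgrp.strong_cont y).tendsto 0).mono_left nhdsWithin_le_nhds
  rw [U_zero_apply hgrp] at hUy
  have h1 : Tendsto (fun h : ℝ => ⟪(h:ℂ)⁻¹ • (U h x - x), U h y⟫) (𝓝[≠] (0:ℝ))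
      (𝓝 ⟪genB U x, y⟫) :=
    (CStarModule.continuous_inner.tendsto (genB U x, y)).comp ((genB_spec hx).prodMk_nhds hUy)
  have h2 : Tendsto (fun h : ℝ => ⟪x, (h:ℂ)⁻¹ • (U h y - y)⟫) (𝓝[≠] (0:ℝ))
      (𝓝 ⟪x, genB U y⟫) :=
    (CStarModule.continuous_inner.tendsto (x, genB U y)).comp
      (tendsto_const_nhds.prodMk_nhds (genB_spec hy))
  have h3 := (h1.add h2).congr' (Eventually.of_forall fun h => hG h)
  exact (tendsto_nhds_unique h3 tendsto_const_nhds).symm ▸ rfl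

lemma inner_intervalIntegral_right (x : E) {g : ℝ → E} (hg : Continuous g) (a b : ℝ) :
    ⟪x, (∫ s in a..b, g s)⟫ = ∫ s in a..b, ⟪x, g s⟫ :=
  ((CStarModule.innerSL (A := A) x).intervalIntegral_comp_comm
    (hg.intervalIntegrable _ _)).symm

lemma inner_intervalIntegral_left (y : E) {g : ℝ → E} (hg : Continuous g) (a b : ℝ) :
    ⟪(∫ s in a..b, g s), y⟫ = ∫ s in a..b, ⟪g s, y⟫ := by
  let SL : E →L[ℝ] A :=
    ((starL' ℝ : A ≃L[ℝ] A).toContinuousLinearMap).comp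
      ((CStarModule.innerSL (A := A) y).restrictScalars ℝ)
  have hSL : ∀ v : E, SL v = ⟪v, y⟫ := by
    intro v
    show star (inner A y v) = inner A v y
    rw [CStarModule.star_inner]
  rw [← hSL]
  rw [← SL.intervalIntegral_comp_comm (hg.intervalIntegrable _ _)]
  simp_rw [hSL]

lemma adj_mem_genD (hgrp : IsC0Group U) (hunit : ∀ t : ℝ, IsUnitaryCLM (U t)) {y w : E}
    (hyw : ∀ x ∈ genD U, ⟪genB U x, y⟫ = ⟪x, w⟫) :
    y ∈ genD U ∧ genB U y = -w := by
  refine mem_genD_of_integral hgrp fun t => ?_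
  refine eq_of_inner_eq_on_dense (genD_dense hgrp) fun x hx => ?_
  have hadj : ∀ (r : ℝ) (v : E), ⟪x, U r v⟫ = ⟪U (-r) x, v⟫ := by
    intro r v
    rw [U_adj hgrp hunit, neg_neg]
  have lhs1 : ⟪x, U t y - y⟫ = ⟪U (-t) x - x, y⟫ := by
    rw [CStarModule.inner_sub_right, CStarModule.inner_sub_left, hadj t y]
  have lhs2 : ⟪U (-t) x - x, y⟫ = ∫ s in (0:ℝ)..(-t), ⟪U s (genB U x), y⟫ := by
    rw [U_sub_integral hgrp hx (-t), inner_intervalIntegral_left y (hgrp.strong_cont _)]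
  have lhs3 : ∀ s : ℝ, ⟪U s (genB U x), y⟫ = ⟪x, U (-s) w⟫ := by
    intro s
    rw [← (genD_U hgrp s hx).2, hyw _ (genD_U hgrp s hx).1, U_adj hgrp hunit]
  have lhs4 : (∫ s in (0:ℝ)..(-t), ⟪U s (genB U x), y⟫) =
      ∫ s in (0:ℝ)..(-t), ⟪x, U (-s) w⟫ := by
    refine intervalIntegral.integral_congr fun s _ => lhs3 s
  have lhs5 : (∫ s in (0:ℝ)..(-t), ⟪x, U (-s) w⟫) = ∫ s in t..(0:ℝ), ⟪x, U s w⟫ := by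
    have := intervalIntegral.integral_comp_neg (a := (0:ℝ)) (b := -t)
      (fun s => ⟪x, U s w⟫)
    rw [this, neg_neg, neg_zero]
  have rhs : ⟪x, (∫ s in (0:ℝ)..t, U s (-w))⟫ = ∫ s in t..(0:ℝ), ⟪x, U s w⟫ := by
    rw [inner_intervalIntegral_right x (hgrp.strong_cont _)]
    simp only [map_neg, CStarModule.inner_neg_right]
    rw [intervalIntegral.integral_neg, intervalIntegral.integral_symm t 0, neg_neg]
  rw [lhs1, lhs2, lhs4, lhs5, rhs]

end Closed

section Resolvent

open MeasureTheory

variable {U : ℝ → E →L[ℂ] E}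

/-- The resolvent `(1 - B)⁻¹` as a Laplace transform. -/
noncomputable def res (U : ℝ → E →L[ℂ] E) (x : E) : E :=
  ∫ s in Set.Ioi (0:ℝ), Real.exp (-s) • U s x

lemma res_cont (hgrp : IsC0Group U) (x : E) :
    Continuous fun s : ℝ => Real.exp (-s) • U s x :=
  (Real.continuous_exp.comp continuous_neg).smul (hgrp.strong_cont x)

lemma res_integrableOn (hgrp : IsC0Group U) (hunit : ∀ t : ℝ, IsUnitaryCLM (U t)) (x : E)
    (c : ℝ) : IntegrableOn (fun s => Real.exp (-s) • U s x) (Set.Ioi c) := by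
  have hexp : IntegrableOn (fun s => Real.exp (-s) * ‖x‖) (Set.Ioi c) := by
    have h1 : IntegrableOn (fun s => Real.exp (-1 * s)) (Set.Ioi c) :=
      exp_neg_integrableOn_Ioi c one_pos
    simpa only [neg_one_mul, IntegrableOn] using h1.mul_const ‖x‖
  refine Integrable.mono' hexp ((res_cont hgrp x).aestronglyMeasurable) ?_
  filter_upwards [] with s
  rw [norm_smul, U_norm_eq hgrp hunit, Real.norm_eq_abs, abs_of_pos (Real.exp_pos _)]

lemma setIntegral_Ioi_shift {g : ℝ → E} (hg : ∀ c : ℝ, IntegrableOn g (Set.Ioi c))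
    (h : ℝ) : (∫ s in Set.Ioi (0:ℝ), g (s + h)) = ∫ s in Set.Ioi h, g s := by
  rw [← integral_indicator measurableSet_Ioi, ← integral_indicator measurableSet_Ioi]
  have hfun : ∀ x : ℝ, (Set.Ioi (0:ℝ)).indicator (fun s => g (s + h)) x =
      (Set.Ioi h).indicator g (x + h) := by
    intro x
    simp only [Set.indicator_apply, Set.mem_Ioi, lt_add_iff_pos_left]
  simp_rw [hfun]
  exact integral_add_right_eq_self ((Set.Ioi h).indicator g) h

lemma integral_Ioi_split {g : ℝ → E} (hg : ∀ c : ℝ, IntegrableOn g (Set.Ioi c)) (h : ℝ) :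
    (∫ s in Set.Ioi h, g s) = (∫ s in h..(0:ℝ), g s) + ∫ s in Set.Ioi (0:ℝ), g s := by
  rcases le_total h 0 with hc | hc
  · have hu : Set.Ioc h 0 ∪ Set.Ioi (0:ℝ) = Set.Ioi h := Set.Ioc_union_Ioi_eq_Ioi hc
    rw [← hu, setIntegral_union (Set.Ioc_disjoint_Ioi le_rfl) measurableSet_Ioi
      ((hg h).mono_set (by rw [← hu]; exact Set.subset_union_left))
      ((hg h).mono_set (by rw [← hu]; exact Set.subset_union_right))]
    congr 1
    rw [intervalIntegral.integral_of_le hc]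
  · have hu : Set.Ioc 0 h ∪ Set.Ioi h = Set.Ioi (0:ℝ) := Set.Ioc_union_Ioi_eq_Ioi hc
    have heq : (∫ s in Set.Ioi (0:ℝ), g s) =
        (∫ s in Set.Ioc (0:ℝ) h, g s) + ∫ s in Set.Ioi h, g s := by
      rw [← hu, setIntegral_union (Set.Ioc_disjoint_Ioi le_rfl) measurableSet_Ioi
        ((hg 0).mono_set (by rw [← hu]; exact Set.subset_union_left))
        ((hg 0).mono_set (by rw [← hu]; exact Set.subset_union_right))]
    rw [heq, intervalIntegral.integral_symm, intervalIntegral.integral_of_le hc]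
    abel

lemma exp_slope_tendsto :
    Tendsto (fun h : ℝ => (Real.exp h - 1) / h) (𝓝[≠] (0:ℝ)) (𝓝 1) := by
  have h1 := (Real.hasDerivAt_exp 0).tendsto_slope_zero
  simp only [zero_add, Real.exp_zero, smul_eq_mul] at h1
  refine h1.congr fun t => ?_
  rw [div_eq_inv_mul]

lemma res_mem (hgrp : IsC0Group U) (hunit : ∀ t : ℝ, IsUnitaryCLM (U t)) (x : E) :
    res U x ∈ genD U ∧ genB U (res U x) = res U x - x := by
  set g : ℝ → E := fun s => Real.exp (-s) • U s x with hgdef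
  have hgc : Continuous g := res_cont hgrp x
  have hgi : ∀ c : ℝ, IntegrableOn g (Set.Ioi c) := res_integrableOn hgrp hunit x
  have hg0 : g 0 = x := by
    rw [hgdef]
    simp only [neg_zero, Real.exp_zero, one_smul]
    exact U_zero_apply hgrp x
  have key : ∀ h : ℝ, U h (res U x) =
      Real.exp h • ((∫ s in h..(0:ℝ), g s) + res U x) := by
    intro h
    have h1 : U h (res U x) = ∫ s in Set.Ioi (0:ℝ), U h (g s) :=
      ((U h).integral_comp_comm (hgi 0)).symm
    have h2 : ∀ s : ℝ, U h (g s) = Real.exp h • g (s + h) := by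
      intro s
      have hq : U h (Real.exp (-s) • U s x) = Real.exp (-s) • U h (U s x) :=
        (U h).map_smul_of_tower _ _
      rw [hgdef]
      simp only []
      rw [hq, smul_smul, ← Real.exp_add]
      have hU : U h (U s x) = U (s + h) x := by
        rw [add_comm s h, hgrp.map_add]
        rfl
      rw [hU]
      congr 2
      ring
    rw [h1]
    simp_rw [h2]
    rw [integral_smul, setIntegral_Ioi_shift hgi, integral_Ioi_split hgi]
    rfl
  have t1 : Tendsto (fun h : ℝ => ((Real.exp h - 1) / h) • res U x) (𝓝[≠] (0:ℝ))
      (𝓝 (res U x)) := by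
    have := exp_slope_tendsto.smul (tendsto_const_nhds (x := res U x))
    simpa using this
  have t2 : Tendsto (fun h : ℝ => Real.exp h • (h⁻¹ • ∫ s in h..(0:ℝ), g s)) (𝓝[≠] (0:ℝ))
      (𝓝 (-x)) := by
    have ha : Tendsto (fun h : ℝ => Real.exp h) (𝓝[≠] (0:ℝ)) (𝓝 1) := by
      have := (Real.continuous_exp.tendsto 0).mono_left (nhdsWithin_le_nhds (s := {(0:ℝ)}ᶜ))
      simpa using this
    have hb : Tendsto (fun h : ℝ => h⁻¹ • ∫ s in h..(0:ℝ), g s) (𝓝[≠] (0:ℝ)) (𝓝 (-x)) := by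
      have h3 := tendsto_average_zero hgc
      rw [hg0] at h3
      refine h3.neg.congr fun h => ?_
      rw [coe_inv_smul, intervalIntegral.integral_symm 0 h, smul_neg]
    have := ha.smul hb
    simpa using this
  have tall : Tendsto (fun h : ℝ => (h:ℂ)⁻¹ • (U h (res U x) - res U x)) (𝓝[≠] (0:ℝ))
      (𝓝 (res U x + -x)) := by
    refine (t1.add t2).congr fun h => ?_
    rw [coe_inv_smul, key h]
    module
  rw [show res U x + -x = res U x - x by abel] at tall
  exact mem_genD_of_tendsto tall

end Resolvent

section NegGroup

open MeasureTheory

variable {U : ℝ → E →L[ℂ] E}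

omit [CompleteSpace E] in
lemma neg_isC0Group (hgrp : IsC0Group U) : IsC0Group (fun t => U (-t)) where
  map_zero := by rw [neg_zero]; exact hgrp.map_zero
  map_add := fun s t => by rw [neg_add]; exact hgrp.map_add (-s) (-t)
  strong_cont := fun x => (hgrp.strong_cont x).comp continuous_neg

omit [CompleteSpace E] in
lemma neg_isUnitary (hunit : ∀ t : ℝ, IsUnitaryCLM (U t)) :
    ∀ t : ℝ, IsUnitaryCLM ((fun t => U (-t)) t) := fun t => hunit (-t)

lemma tendsto_neg_punctured :
    Tendsto (fun t : ℝ => -t) (𝓝[≠] (0:ℝ)) (𝓝[≠] (0:ℝ)) := by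
  have h1 : Tendsto (fun t : ℝ => -t) (𝓝[≠] (0:ℝ)) (𝓝 (0:ℝ)) := by
    have h0 : Tendsto (fun t : ℝ => -t) (𝓝 (0:ℝ)) (𝓝 (0:ℝ)) := by
      simpa using continuous_neg.tendsto (0:ℝ)
    exact h0.mono_left nhdsWithin_le_nhds
  refine tendsto_nhdsWithin_of_tendsto_nhds_of_eventually_within _ h1 ?_
  filter_upwards [self_mem_nhdsWithin] with t ht
  simp only [Set.mem_compl_iff, Set.mem_singleton_iff] at ht ⊢
  exact neg_ne_zero.mpr ht

lemma genD_neg {x : E} (hx : x ∈ genD U) :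
    x ∈ genD (fun t => U (-t)) ∧ genB (fun t => U (-t)) x = -genB U x := by
  have h2 := (genB_spec hx).comp tendsto_neg_punctured
  refine mem_genD_of_tendsto (h2.neg.congr fun t => ?_)
  simp only [Function.comp_apply]
  rw [← neg_smul]
  congr 1
  push_cast
  rw [inv_neg, neg_neg]

lemma resm_mem (hgrp : IsC0Group U) (hunit : ∀ t : ℝ, IsUnitaryCLM (U t)) (x : E) :
    res (fun t => U (-t)) x ∈ genD U ∧
      genB U (res (fun t => U (-t)) x) = x - res (fun t => U (-t)) x := by
  set V : ℝ → E →L[ℂ] E := fun t => U (-t) with hV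
  have hVgrp : IsC0Group V := neg_isC0Group hgrp
  have hVunit : ∀ t, IsUnitaryCLM (V t) := neg_isUnitary hunit
  have h1 := res_mem hVgrp hVunit x
  have hVV : (fun t => V (-t)) = U := by
    funext t
    rw [hV]
    simp only [neg_neg]
  have h2 := genD_neg (U := V) h1.1
  rw [hVV] at h2
  refine ⟨h2.1, ?_⟩
  rw [h2.2, h1.2]
  abel

lemma genD_sub {x y : E} (hx : x ∈ genD U) (hy : y ∈ genD U) :
    x - y ∈ genD U ∧ genB U (x - y) = genB U x - genB U y := by
  have h1 := genD_smul (-1 : ℂ) hy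
  have h2 := genD_add hx h1.1
  rw [h1.2] at h2
  simp only [neg_one_smul, ← sub_eq_add_neg] at h2
  exact h2

lemma surj_one_sub_sq (hgrp : IsC0Group U) (hunit : ∀ t : ℝ, IsUnitaryCLM (U t)) (y : E) :
    ∃ x, x ∈ genD U ∧ genB U x ∈ genD U ∧ x - genB U (genB U x) = y := by
  set z := res (fun t => U (-t)) y with hz
  have hzm := resm_mem hgrp hunit y
  set x := res U z with hx
  have hxm := res_mem hgrp hunit z
  refine ⟨x, hxm.1, ?_, ?_⟩
  · rw [hxm.2]
    exact (genD_sub hxm.1 hzm.1).1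
  · rw [hxm.2]
    have hBB := genD_sub hxm.1 hzm.1
    rw [hBB.2, hxm.2, hzm.2]
    abel

end NegGroup

section NormCont

variable {U : ℝ → E →L[ℂ] E}

lemma all_mem_genD_of_norm_continuous (hgrp : IsC0Group U) (hcontU : Continuous U) :
    ∀ y : E, y ∈ genD U := by
  obtain ⟨δ, hδ, hball⟩ := Metric.continuousAt_iff.mp (hcontU.continuousAt (x := (0:ℝ)))
    (1/2) (by norm_num)
  set t₀ : ℝ := δ/2 with ht₀def
  have ht₀ : 0 < t₀ := by positivity
  have hUi : IntervalIntegrable U MeasureTheory.volume 0 t₀ := hcontU.intervalIntegrable _ _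
  set J : E →L[ℂ] E := ∫ s in (0:ℝ)..t₀, U s with hJdef
  have happ : ∀ z : E, J z = ∫ s in (0:ℝ)..t₀, U s z := by
    intro z
    have h := (ContinuousLinearMap.apply ℂ E z).intervalIntegral_comp_comm hUi
    simpa [hJdef] using h.symm
  set K : E →L[ℂ] E := 1 - (t₀⁻¹ : ℝ) • J with hKdef
  have h1J : (∫ s in (0:ℝ)..t₀, ((1 : E →L[ℂ] E) - U s)) = t₀ • (1 : E →L[ℂ] E) - J := by
    rw [intervalIntegral.integral_sub intervalIntegrable_const hUi,
      intervalIntegral.integral_const, sub_zero, hJdef]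
  have hU0 : U 0 = (1 : E →L[ℂ] E) := hgrp.map_zero
  have hnormI : ‖t₀ • (1 : E →L[ℂ] E) - J‖ ≤ (1/2) * |t₀ - 0| := by
    rw [← h1J]
    refine intervalIntegral.norm_integral_le_of_norm_le_const fun s hs => ?_
    rw [Set.uIoc_of_le (le_of_lt ht₀)] at hs
    have hdist : dist s 0 < δ := by
      rw [Real.dist_eq, sub_zero, abs_of_pos hs.1]
      calc s ≤ t₀ := hs.2
        _ < δ := by rw [ht₀def]; linarith
    have hb := hball hdist
    rw [dist_eq_norm, hU0] at hb
    rw [norm_sub_rev]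
    exact le_of_lt hb
  have hKnorm : ‖K‖ ≤ 1/2 := by
    have hK2 : K = (t₀⁻¹ : ℝ) • (t₀ • (1 : E →L[ℂ] E) - J) := by
      rw [smul_sub, smul_smul, inv_mul_cancel₀ (ne_of_gt ht₀), one_smul, hKdef]
    rw [hK2]
    refine le_trans (ContinuousLinearMap.opNorm_smul_le _ _) ?_
    have h3 : ‖(t₀⁻¹ : ℝ)‖ = t₀⁻¹ := by
      rw [Real.norm_eq_abs, abs_of_pos (inv_pos.mpr ht₀)]
    rw [h3]
    calc t₀⁻¹ * ‖t₀ • (1 : E →L[ℂ] E) - J‖ ≤ t₀⁻¹ * ((1/2) * |t₀ - 0|) :=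
          mul_le_mul_of_nonneg_left hnormI (le_of_lt (inv_pos.mpr ht₀))
      _ = 1/2 := by
          rw [sub_zero, abs_of_pos ht₀]
          field_simp
  have hKlt : ‖K‖ < 1 := lt_of_le_of_lt hKnorm (by norm_num)
  set u : (E →L[ℂ] E)ˣ := Units.oneSub K hKlt with hudef
  intro y
  have hy : (u.val * (↑u⁻¹ : E →L[ℂ] E)) y = y := by
    rw [u.mul_inv]
    rfl
  have hval : u.val = 1 - K := rfl
  rw [hval] at hy
  set z := (↑u⁻¹ : E →L[ℂ] E) y with hzdef
  have h2 : ((1 : E →L[ℂ] E) - K) z = (t₀⁻¹ : ℝ) • (J z) := by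
    rw [hKdef, sub_sub_cancel]
    rfl
  have hy2 : (t₀⁻¹ : ℝ) • (J z) = y := by
    rw [← h2]
    exact hy
  rw [← hy2, happ z, ← Complex.coe_smul]
  exact (genD_smul _ (j_mem_genD hgrp z t₀).1).1

end NormCont

/-- **Stone's theorem for Hilbert C⋆-modules.** Let `(U_t)` be a `C₀`-group on
the Hilbert C⋆-module `E` consisting of unitary elements of `L(E)`.  Then (i) there is a
self-adjoint regular operator `T` on `E` with `U_t = exp(itT)` for all `t` (rendered via the
characterizing property that `iT` is the generator of `(U_t)`), and (ii) if `t ↦ U_t` is norm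
continuous, then `T ∈ L(E)`, i.e. `T` is an everywhere-defined bounded adjointable operator. -/
theorem statement1 (U : ℝ → (E →L[ℂ] E)) (hgrp : IsC0Group U)
    (hunit : ∀ t : ℝ, IsUnitaryCLM (U t)) :
    ∃ (D : Set E) (T : E → E), IsRegular D T ∧ IsSelfAdjointOp D T ∧
      IsGenOfGroup U D (fun x => Complex.I • T x) ∧
      ((Continuous U) → D = Set.univ ∧
        ∃ Tc : E →L[ℂ] E, (∀ x, Tc x = T x) ∧ ∃ v : E →L[ℂ] E, AdjointableCLM Tc v) := by
  classical
  set T : E → E := fun x => (-Complex.I) • genB U x with hTdef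
  have hIK : (Complex.I * -Complex.I) = 1 := by simp [mul_neg, Complex.I_mul_I]
  have hKI : ((-Complex.I) * Complex.I) = 1 := by simp [neg_mul, Complex.I_mul_I]
  have hKK : ((-Complex.I) * -Complex.I) = -1 := by simp [neg_mul, mul_neg, Complex.I_mul_I]
  have hIT : ∀ v : E, Complex.I • ((-Complex.I) • v) = v := fun v => by
    rw [smul_smul, hIK, one_smul]
  have hstar : star (-Complex.I) = Complex.I := by simp
  have hstar2 : star Complex.I = -Complex.I := by simp
  have hskew : ∀ x ∈ genD U, ∀ y ∈ genD U, ⟪genB U x, y⟫ = -⟪x, genB U y⟫ := by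
    intro x hx y hy
    exact eq_neg_of_add_eq_zero_left (inner_genB_skew hgrp hunit hx hy)
  have hadjT : ∀ x ∈ genD U, ∀ y ∈ genD U, ⟪T x, y⟫ = ⟪x, T y⟫ := by
    intro x hx y hy
    simp only [hTdef]
    rw [CStarModule.inner_smul_left_complex, CStarModule.inner_smul_right_complex, hstar,
      hskew x hx y hy, smul_neg, ← neg_smul]
  have hDadj : genD U ⊆ adjDom (genD U) T := fun y hy =>
    ⟨T y, fun x hx => hadjT x hx y hy⟩
  have hadjD : ∀ y ∈ adjDom (genD U) T, y ∈ genD U := by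
    intro y hy
    obtain ⟨z, hz⟩ := hy
    have hyw : ∀ x ∈ genD U, ⟪genB U x, y⟫ = ⟪x, (-Complex.I) • z⟫ := by
      intro x hx
      calc ⟪genB U x, y⟫ = ⟪Complex.I • T x, y⟫ := by rw [hIT]
        _ = star Complex.I • ⟪T x, y⟫ := CStarModule.inner_smul_left_complex
        _ = (-Complex.I) • ⟪x, z⟫ := by rw [hz x hx, hstar2]
        _ = ⟪x, (-Complex.I) • z⟫ := CStarModule.inner_smul_right_complex.symm
    exact (adj_mem_genD hgrp hunit hyw).1
  have hadjEq : adjDom (genD U) T = genD U :=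
    Set.Subset.antisymm (fun y hy => hadjD y hy) hDadj
  have hWit : ∀ y ∈ genD U, adjFun (genD U) T y = T y := by
    intro y hy
    have hex : ∃ z : E, ∀ x ∈ genD U, ⟪T x, y⟫ = ⟪x, z⟫ :=
      ⟨T y, fun x hx => hadjT x hx y hy⟩
    rw [adjFun, dif_pos hex]
    refine eq_of_inner_eq_on_dense (genD_dense hgrp) fun x hx => ?_
    rw [← hex.choose_spec x hx, hadjT x hx y hy]
  have hclosedT : IsClosed {p : E × E | p.1 ∈ genD U ∧ p.2 = T p.1} := by
    have hgraph : {p : E × E | p.1 ∈ genD U ∧ p.2 = T p.1} =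
        (fun p : E × E => (p.1, Complex.I • p.2)) ⁻¹'
          {p : E × E | p.1 ∈ genD U ∧ p.2 = genB U p.1} := by
      ext p
      simp only [Set.mem_setOf_eq, Set.mem_preimage]
      constructor
      · rintro ⟨h1, h2⟩
        exact ⟨h1, by rw [h2]; exact hIT _⟩
      · rintro ⟨h1, h2⟩
        refine ⟨h1, ?_⟩
        simp only [hTdef]
        rw [← h2, smul_smul, hKI, one_smul]
    rw [hgraph]
    exact (genGraph_closed hgrp hunit).preimage
      (continuous_fst.prodMk (continuous_snd.const_smul _))
  have hgen : ∀ x ∈ genD U, Tendsto (fun t : ℝ => (t : ℂ)⁻¹ • (U t x - x)) (𝓝[≠] (0 : ℝ))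
      (𝓝 (Complex.I • T x)) := by
    intro x hx
    have h1 : Complex.I • T x = genB U x := hIT _
    rw [h1]
    exact genB_spec hx
  have himg : Dense ((fun x => x + adjFun (genD U) T (T x)) ''
      {x | x ∈ genD U ∧ T x ∈ adjDom (genD U) T}) := by
    have himage : ∀ y : E, y ∈ (fun x => x + adjFun (genD U) T (T x)) ''
        {x | x ∈ genD U ∧ T x ∈ adjDom (genD U) T} := by
      intro y
      obtain ⟨x, hx, hBx, hsum⟩ := surj_one_sub_sq hgrp hunit y
      have hTx : T x ∈ genD U := (genD_smul _ hBx).1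
      refine ⟨x, ⟨hx, hDadj hTx⟩, ?_⟩
      simp only []
      rw [hWit (T x) hTx]
      have hTT : T (T x) = -genB U (genB U x) := by
        simp only [hTdef]
        rw [(genD_smul (-Complex.I) hBx).2, smul_smul, hKK, neg_one_smul]
      rw [hTT, ← sub_eq_add_neg]
      exact hsum
    rw [Set.eq_univ_of_forall himage]
    exact dense_univ
  refine ⟨genD U, T,
    { dense_dom := genD_dense hgrp
      linear :=
        { zero_mem := (genD_zero (U := U)).1
          add_mem := fun x y hx hy => (genD_add hx hy).1
          smul_mem := fun c x hx => (genD_smul c hx).1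
          map_add := fun x y hx hy => by
            simp only [hTdef]
            rw [(genD_add hx hy).2, smul_add]
          map_smul := fun c x hx => by
            simp only [hTdef]
            rw [(genD_smul c hx).2, smul_comm] }
      op_smul_mem := fun a x hx => (genD_opSmul hgrp hunit a hx).1
      map_op_smul := fun a x hx => by
        simp only [hTdef]
        rw [(genD_opSmul hgrp hunit a hx).2, opSmul_smul]
      closed_graph := hclosedT
      dense_adj_dom := by rw [hadjEq]; exact genD_dense hgrp
      dense_image := himg },
    ⟨hadjEq, hWit⟩, ⟨fun x => Iff.rfl, hgen⟩, ?_⟩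
  intro hcontU
  have hall : ∀ y : E, y ∈ genD U := all_mem_genD_of_norm_continuous hgrp hcontU
  refine ⟨Set.eq_univ_iff_forall.mpr hall, ?_⟩
  set Tlin : E →ₗ[ℂ] E :=
    { toFun := T
      map_add' := fun x y => by
        simp only [hTdef]
        rw [(genD_add (hall x) (hall y)).2, smul_add]
      map_smul' := fun c x => by
        simp only [hTdef, RingHom.id_apply]
        rw [(genD_smul c (hall x)).2, smul_comm] } with hTlin
  have hgeq : (Tlin.graph : Set (E × E)) = {p : E × E | p.1 ∈ genD U ∧ p.2 = T p.1} := by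
    ext p
    simp only [Set.mem_setOf_eq, SetLike.mem_coe, LinearMap.mem_graph_iff]
    exact ⟨fun h => ⟨hall _, h⟩, fun h => h.2⟩
  have hTcont : Continuous Tlin := Tlin.continuous_of_isClosed_graph (by
    rw [hgeq]; exact hclosedT)
  exact ⟨⟨Tlin, hTcont⟩, fun x => rfl, ⟨Tlin, hTcont⟩, fun x y => hadjT x (hall x) y (hall y)⟩
end HilbertModule
end OSMult
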